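/- (Parity lemma for twofold-degenerate ground spaces) Let S, R be nonempty finite types. Let U_S, V_S be unitary matrices on ℂ^S and U_R, V_R unitary matrices on ℂ^R, and set U = U_S ⊗ U_R and V = V_S ⊗ V_R. Let Π be an orthogonal projection matrix on ℂ^S with U_S Π U_S^† = Π and V_S Π V_S^† = Π. Let ψ_+ ∈ ℂ^{S×R} be a unit vector with U ψ_+ = ψ_+, set ψ_- = V ψ_+, and assume U ψ_- = −ψ_-. Then for all a, b ∈ ℂ with |a|² + |b|² = 1, the vector ψ = a ψ_+ + b ψ_- satisfies ⟨ψ, (Π ⊗ 1_R) ψ⟩ = ⟨ψ_+, (Π ⊗ 1_R) ψ_+⟩; in particular the frustration 1 − ⟨ψ, (Π ⊗ 1_R) ψ⟩ is the same for every pure state in the span of ψ_+ and ψ_-. -/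

import Mathlib

open Matrix
open scoped ComplexOrder Kronecker Classical

/-- Sum of the `d` largest eigenvalues (with multiplicity, decreasing order)
of a Hermitian matrix. -/
noncomputable def sumTopEigs {n : Type*} [Fintype n] [DecidableEq n]
    {A : Matrix n n ℂ} (hA : A.IsHermitian) (d : ℕ) : ℝ :=
  ((((Finset.univ.val.map hA.eigenvalues).sort (· ≤ ·)).reverse.take d)).sum

/-- `ε^(d)(A) = 1 - Σ_{i=1}^d λ_i^↓(A)` for Hermitian `A` (junk value `0` otherwise). -/
noncomputable def epsD {n : Type*} [Fintype n] [DecidableEq n]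
    (A : Matrix n n ℂ) (d : ℕ) : ℝ :=
  if h : A.IsHermitian then 1 - sumTopEigs h d else 0

/-- `|ψ⟩⟨ψ|`. -/
noncomputable def outer {n : Type*} (ψ : n → ℂ) : Matrix n n ℂ :=
  fun i j => ψ i * star (ψ j)

/-- Partial trace over the second tensor factor. -/
noncomputable def ptraceR {S R : Type*} [Fintype R] (M : Matrix (S × R) (S × R) ℂ) :
    Matrix S S ℂ :=
  fun s s' => ∑ r, M (s, r) (s', r)

/-- Partial trace over the third tensor factor. -/
noncomputable def ptrace3 {S R A : Type*} [Fintype A] (M : Matrix (S × R × A) (S × R × A) ℂ) :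
    Matrix (S × R) (S × R) ℂ :=
  fun p q => ∑ a, M (p.1, p.2, a) (q.1, q.2, a)

/-- Partial trace over the second (middle) tensor factor. -/
noncomputable def ptrace2 {S R A : Type*} [Fintype R] (M : Matrix (S × R × A) (S × R × A) ℂ) :
    Matrix (S × A) (S × A) ℂ :=
  fun p q => ∑ r, M (p.1, r, p.2) (q.1, r, q.2)

/-- Partial trace over the second and third tensor factors. -/
noncomputable def ptrace23 {S R A : Type*} [Fintype R] [Fintype A]
    (M : Matrix (S × R × A) (S × R × A) ℂ) : Matrix S S ℂ :=
  fun s s' => ∑ r, ∑ a, M (s, r, a) (s', r, a)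

/-- Convex-roof extension `E^(d)_{S|R}`: the infimum over all finite pure-state
convex decompositions `ρ = Σ_k p_k |ψ_k⟩⟨ψ_k|` of `Σ_k p_k ε^(d)(tr_R |ψ_k⟩⟨ψ_k|)`. -/
noncomputable def convRoofE {S R : Type*} [Fintype S] [Fintype R] [DecidableEq S]
    (d : ℕ) (ρ : Matrix (S × R) (S × R) ℂ) : ℝ :=
  sInf { e : ℝ | ∃ (m : ℕ) (p : Fin m → ℝ) (ψ : Fin m → (S × R → ℂ)),
    (∀ k, 0 ≤ p k) ∧ (∑ k, p k = 1) ∧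
    (∀ k, star (ψ k) ⬝ᵥ ψ k = 1) ∧
    (ρ = ∑ k, (p k : ℂ) • outer (ψ k)) ∧
    e = ∑ k, p k * epsD (ptraceR (outer (ψ k))) d }

/-- Classical correlations `C^(d)_{S|A}`:
`ε^(d)(tr_A ρ)` minus the infimum over all POVMs `{M_x}` on `A` of
`Σ_x p_x ε^(d)(p_x⁻¹ tr_A((1_S ⊗ M_x) ρ))`, where `p_x = tr((1_S ⊗ M_x) ρ)`
and terms with `p_x = 0` are omitted. -/
noncomputable def classC {S A : Type*} [Fintype S] [Fintype A] [DecidableEq S] [DecidableEq A]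
    (d : ℕ) (ρ : Matrix (S × A) (S × A) ℂ) : ℝ :=
  epsD (ptraceR ρ) d -
  sInf { e : ℝ | ∃ (m : ℕ) (M : Fin m → Matrix A A ℂ),
    (∀ x, (M x).PosSemidef) ∧ (∑ x, M x = 1) ∧
    e = ∑ x,
      (if (((1 : Matrix S S ℂ) ⊗ₖ M x) * ρ).trace = 0 then 0
       else ((((1 : Matrix S S ℂ) ⊗ₖ M x) * ρ).trace).re *
         epsD (((((1 : Matrix S S ℂ) ⊗ₖ M x) * ρ).trace)⁻¹ •
           ptraceR (((1 : Matrix S S ℂ) ⊗ₖ M x) * ρ)) d) }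

lemma kron_ct {S R : Type*} (A : Matrix S S ℂ) (B : Matrix R R ℂ) :
    (A ⊗ₖ B)ᴴ = Aᴴ ⊗ₖ Bᴴ := by
  ext ⟨i,j⟩ ⟨k,l⟩
  simp [conjTranspose_apply, kroneckerMap_apply, mul_comm]

lemma conj_invariant {n : Type*} [Fintype n] [DecidableEq n]
    (W M : Matrix n n ℂ) (hW : W ∈ Matrix.unitaryGroup n ℂ)
    (h : W * M * Wᴴ = M) (x y : n → ℂ) :
    star (W *ᵥ x) ⬝ᵥ (M *ᵥ (W *ᵥ y)) = star x ⬝ᵥ (M *ᵥ y) := by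
  have h1 : Wᴴ * W = 1 := by
    simpa [star_eq_conjTranspose] using (Matrix.mem_unitaryGroup_iff'.mp hW)
  have h2 : Wᴴ * M * W = M := by
    calc Wᴴ * M * W = Wᴴ * (W * M * Wᴴ) * W := by rw [h]
    _ = M := by
      simp only [Matrix.mul_assoc, h1, Matrix.mul_one]
      rw [← Matrix.mul_assoc, h1, Matrix.one_mul]
  rw [star_mulVec, ← dotProduct_mulVec, mulVec_mulVec, mulVec_mulVec, h2]

/-- Parity lemma for twofold-degenerate ground spaces: with product
unitaries `U = U_S ⊗ U_R`, `V = V_S ⊗ V_R`, a projection `P` on `ℂ^S` invariant under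
conjugation by `U_S` and `V_S`, a unit vector `ψ₊` with `U ψ₊ = ψ₊`, `ψ₋ = V ψ₊`, and
`U ψ₋ = -ψ₋`, every normalized `ψ = a ψ₊ + b ψ₋` satisfies
`⟨ψ, (P ⊗ 1_R) ψ⟩ = ⟨ψ₊, (P ⊗ 1_R) ψ₊⟩`. -/
theorem stmt14 {S R : Type*} [Fintype S] [Fintype R] [DecidableEq S] [DecidableEq R]
    [Nonempty S] [Nonempty R]
    (US VS : Matrix S S ℂ) (UR VR : Matrix R R ℂ)
    (hUS : US ∈ Matrix.unitaryGroup S ℂ) (hVS : VS ∈ Matrix.unitaryGroup S ℂ)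
    (hUR : UR ∈ Matrix.unitaryGroup R ℂ) (hVR : VR ∈ Matrix.unitaryGroup R ℂ)
    (P : Matrix S S ℂ) (hP : P.IsHermitian) (hP2 : P * P = P)
    (hUP : US * P * USᴴ = P) (hVP : VS * P * VSᴴ = P)
    (ψp : S × R → ℂ) (hψp : star ψp ⬝ᵥ ψp = 1)
    (hU : (US ⊗ₖ UR) *ᵥ ψp = ψp)
    (ψm : S × R → ℂ) (hψm : ψm = (VS ⊗ₖ VR) *ᵥ ψp)
    (hUm : (US ⊗ₖ UR) *ᵥ ψm = -ψm)
    (a b : ℂ) (hab : ‖a‖ ^ 2 + ‖b‖ ^ 2 = 1) :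
    star (a • ψp + b • ψm) ⬝ᵥ
        ((P ⊗ₖ (1 : Matrix R R ℂ)) *ᵥ (a • ψp + b • ψm)) =
      star ψp ⬝ᵥ ((P ⊗ₖ (1 : Matrix R R ℂ)) *ᵥ ψp) := by
  set Q := P ⊗ₖ (1 : Matrix R R ℂ) with hQ
  have hURone : UR * 1 * URᴴ = 1 := by
    rw [Matrix.mul_one]
    simpa [star_eq_conjTranspose] using (Matrix.mem_unitaryGroup_iff.mp hUR)
  have hVRone : VR * 1 * VRᴴ = 1 := by
    rw [Matrix.mul_one]
    simpa [star_eq_conjTranspose] using (Matrix.mem_unitaryGroup_iff.mp hVR)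
  have hQU : (US ⊗ₖ UR) * Q * (US ⊗ₖ UR)ᴴ = Q := by
    rw [hQ, kron_ct, ← Matrix.mul_kronecker_mul, ← Matrix.mul_kronecker_mul, hUP, hURone]
  have hQV : (VS ⊗ₖ VR) * Q * (VS ⊗ₖ VR)ᴴ = Q := by
    rw [hQ, kron_ct, ← Matrix.mul_kronecker_mul, ← Matrix.mul_kronecker_mul, hVP, hVRone]
  have hUkron : US ⊗ₖ UR ∈ Matrix.unitaryGroup (S × R) ℂ := by
    rw [Matrix.mem_unitaryGroup_iff]
    rw [star_eq_conjTranspose, kron_ct, ← Matrix.mul_kronecker_mul]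
    rw [show US * USᴴ = 1 from by simpa [star_eq_conjTranspose] using (Matrix.mem_unitaryGroup_iff.mp hUS),
        show UR * URᴴ = 1 from by simpa [star_eq_conjTranspose] using (Matrix.mem_unitaryGroup_iff.mp hUR)]
    exact Matrix.one_kronecker_one
  have hVkron : VS ⊗ₖ VR ∈ Matrix.unitaryGroup (S × R) ℂ := by
    rw [Matrix.mem_unitaryGroup_iff]
    rw [star_eq_conjTranspose, kron_ct, ← Matrix.mul_kronecker_mul]
    rw [show VS * VSᴴ = 1 from by simpa [star_eq_conjTranspose] using (Matrix.mem_unitaryGroup_iff.mp hVS),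
        show VR * VRᴴ = 1 from by simpa [star_eq_conjTranspose] using (Matrix.mem_unitaryGroup_iff.mp hVR)]
    exact Matrix.one_kronecker_one
  have hmm : star ψm ⬝ᵥ (Q *ᵥ ψm) = star ψp ⬝ᵥ (Q *ᵥ ψp) := by
    rw [hψm]; exact conj_invariant _ _ hVkron hQV ψp ψp
  have hc : star ψp ⬝ᵥ (Q *ᵥ ψm) = 0 := by
    have := conj_invariant _ _ hUkron hQU ψp ψm
    rw [hU, hUm] at this
    simp only [Matrix.mulVec_neg, dotProduct_neg] at this
    linear_combination (-(1:ℂ)/2) * this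
  have hc2 : star ψm ⬝ᵥ (Q *ᵥ ψp) = 0 := by
    have := conj_invariant _ _ hUkron hQU ψm ψp
    rw [hU, hUm] at this
    simp only [star_neg, neg_dotProduct] at this
    linear_combination (-(1:ℂ)/2) * this
  have habC : (starRingEnd ℂ) a * a + (starRingEnd ℂ) b * b = 1 := by
    rw [mul_comm, mul_comm ((starRingEnd ℂ) b), Complex.mul_conj, Complex.mul_conj]
    norm_cast
    simpa [Complex.normSq_eq_norm_sq] using hab
  simp only [star_add, star_smul, Matrix.mulVec_add, Matrix.mulVec_smul,
    add_dotProduct, dotProduct_add, smul_dotProduct, dotProduct_smul,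
    smul_eq_mul, Complex.star_def]
  rw [hc, hc2, hmm]
  ring_nf
  linear_combination (star ψp ⬝ᵥ (Q *ᵥ ψp)) * habC
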